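/- Let V ⊆ H be a subspace of finite dimension r ≥ 1 and let α = (α_j)_{j∈ℕ} be the local coherence of V with respect to F. Then α is square-summable and Σ_{j∈ℕ} α_j² ≤ r². -/

import Mathlib

noncomputable section

/-- `H = ℓ²(ℕ; ℂ)`, the Hilbert space of square-summable complex sequences. -/
abbrev Hspace := lp (fun _ : ℕ => ℂ) 2

set_option maxHeartbeats 1000000

/-- if `V ⊆ H` is a subspace of finite dimension `r ≥ 1` and
`α` is the local coherence of `V` with respect to the unitary operator `F`
(i.e. `α j` is the supremum of `|(Fx)_j|` over unit vectors `x ∈ V`), then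
`α` is square-summable and `∑ j, α j ^ 2 ≤ r ^ 2`. -/
theorem local_coherence_sq_summable
    (F : Hspace ≃ₗᵢ[ℂ] Hspace) (V : Submodule ℂ Hspace)
    (r : ℕ) (hr : 1 ≤ r) (hdim : Module.finrank ℂ V = r) [FiniteDimensional ℂ V]
    (α : ℕ → ℝ)
    (hα : ∀ j : ℕ, IsLUB {t : ℝ | ∃ x ∈ V, ‖x‖ = 1 ∧ t = ‖F x j‖} (α j)) :
    Summable (fun j => α j ^ 2) ∧ ∑' j : ℕ, α j ^ 2 ≤ (r : ℝ) ^ 2 := by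
  classical
  let b : OrthonormalBasis (Fin r) ℂ V :=
    (stdOrthonormalBasis ℂ V).reindex (finCongr hdim)
  let y : Fin r → Hspace := fun i => F (b i : Hspace)
  have hb_norm : ∀ i, ‖(b i : Hspace)‖ = 1 := fun i => by
    have := b.orthonormal.1 i
    exact this
  have hy_norm : ∀ i, ‖y i‖ = 1 := fun i => by
    simp only [y, F.norm_map]; exact hb_norm i
  let g : ℕ → ℝ := fun j => ∑ i, ‖y i j‖ ^ 2
  -- each column sums to 1
  have hsum_i : ∀ i : Fin r, HasSum (fun j => ‖y i j‖ ^ 2) 1 := by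
    intro i
    have h2 : 0 < (2 : ENNReal).toReal := by norm_num
    have := lp.hasSum_norm h2 (y i)
    simp only [ENNReal.toReal_ofNat] at this
    have h' : HasSum (fun j => ‖y i j‖ ^ (2 : ℕ)) (‖y i‖ ^ (2 : ℕ)) := by
      convert this using 2 with j
      · rw [← Real.rpow_natCast]; norm_num
      · rw [← Real.rpow_natCast]; norm_num
    simpa [hy_norm i] using h'
  have hg : HasSum g (r : ℝ) := by
    have := hasSum_sum (s := (Finset.univ : Finset (Fin r)))
      (f := fun i j => ‖y i j‖ ^ 2) (a := fun _ => (1 : ℝ))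
      (fun i _ => hsum_i i)
    simpa [g] using this
  have hg_nonneg : ∀ j, 0 ≤ g j := fun j =>
    Finset.sum_nonneg fun i _ => by positivity
  -- key pointwise bound
  have key : ∀ j, α j ^ 2 ≤ g j := by
    intro j
    have hub : ∀ t ∈ {t : ℝ | ∃ x ∈ V, ‖x‖ = 1 ∧ t = ‖F x j‖}, t ≤ Real.sqrt (g j) := by
      rintro t ⟨x, hxV, hx1, rfl⟩
      set v : V := ⟨x, hxV⟩
      have hrepr : ∑ i, b.repr v i • (b i : Hspace) = x := by
        have h := congrArg (Subtype.val) (b.sum_repr v)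
        simpa using h
      have hFx : F x j = ∑ i, b.repr v i * y i j := by
        rw [← hrepr, map_sum]
        simp only [map_smul]
        rw [lp.coeFn_sum]
        simp [y, lp.coeFn_smul, smul_eq_mul]
      have hcsum : ∑ i, ‖b.repr v i‖ ^ 2 = 1 := by
        have hnorm : ‖b.repr v‖ = 1 := by
          rw [LinearIsometryEquiv.norm_map]
          show ‖(v : Hspace)‖ = 1
          exact hx1
        have h := EuclideanSpace.norm_eq (b.repr v)
        rw [hnorm] at h
        exact Real.sqrt_eq_one.mp h.symm
      have h1 : ‖F x j‖ ≤ ∑ i, ‖b.repr v i‖ * ‖y i j‖ := by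
        rw [hFx]
        refine (norm_sum_le _ _).trans ?_
        exact Finset.sum_le_sum fun i _ => by rw [norm_mul]
      have h2 : (∑ i, ‖b.repr v i‖ * ‖y i j‖) ^ 2 ≤ g j := by
        have h := Finset.sum_mul_sq_le_sq_mul_sq Finset.univ
          (fun i => ‖b.repr v i‖) (fun i => ‖y i j‖)
        rw [hcsum, one_mul] at h
        exact h
      have h3 : ‖F x j‖ ^ 2 ≤ g j := by
        have hnn : 0 ≤ ∑ i, ‖b.repr v i‖ * ‖y i j‖ :=
          Finset.sum_nonneg fun i _ => by positivity
        calc ‖F x j‖ ^ 2 ≤ (∑ i, ‖b.repr v i‖ * ‖y i j‖) ^ 2 := by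
              apply pow_le_pow_left₀ (norm_nonneg _) h1
          _ ≤ g j := h2
      calc ‖F x j‖ = Real.sqrt (‖F x j‖ ^ 2) := by
            rw [Real.sqrt_sq (norm_nonneg _)]
        _ ≤ Real.sqrt (g j) := Real.sqrt_le_sqrt h3
    have hle : α j ≤ Real.sqrt (g j) := (hα j).2 hub
    have hα_nonneg : 0 ≤ α j := by
      have hFr : (0 : ℕ) < r := hr
      have hmem : ‖F ((b ⟨0, hFr⟩ : V) : Hspace) j‖ ∈
          {t : ℝ | ∃ x ∈ V, ‖x‖ = 1 ∧ t = ‖F x j‖} :=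
        ⟨(b ⟨0, hFr⟩ : V), (b ⟨0, hFr⟩ : V).2, hb_norm _, rfl⟩
      exact le_trans (norm_nonneg _) ((hα j).1 hmem)
    calc α j ^ 2 ≤ Real.sqrt (g j) ^ 2 := by
          apply pow_le_pow_left₀ hα_nonneg hle
      _ = g j := Real.sq_sqrt (hg_nonneg j)
  have hα2_nonneg : ∀ j, 0 ≤ α j ^ 2 := fun j => sq_nonneg _
  have hsummable : Summable (fun j => α j ^ 2) :=
    Summable.of_nonneg_of_le hα2_nonneg key hg.summable
  refine ⟨hsummable, ?_⟩
  calc ∑' j, α j ^ 2 ≤ ∑' j, g j := Summable.tsum_le_tsum key hsummable hg.summable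
    _ = (r : ℝ) := hg.tsum_eq
    _ ≤ (r : ℝ) ^ 2 := by
        have : (1 : ℝ) ≤ (r : ℝ) := by exact_mod_cast hr
        nlinarith
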